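/- For the growth-dependent withdrawal process W(t) = 1 - e^{w - G(t)}, the resulting wealth process is independent of the growth terms and has the explicit form V(T) = exp(B(T) - B(0) + (c + w)·T) for every T ≥ 0, where V(0) = 1 and V(t) = V(t-1)·e^{G(t)+Δ(t)}·(1 - W(t)). -/
import Mathlib


open MeasureTheory ProbabilityTheory Filter Topology

/-- For the growth-dependent withdrawal process `W(t) = 1 - e^{w - G(t)}`, the
wealth process has the explicit form `V(T) = exp(B(T) - B(0) + (c+w)·T)`, which
does not involve the growth terms `G`. -/
theorem stmt_14
    {Ω : Type*} [MeasureSpace Ω] [IsProbabilityMeasure (ℙ : Measure Ω)]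
    (c w : ℝ) (B : ℕ → Ω → ℝ) (G : ℕ → Ω → ℝ) (W : ℕ → Ω → ℝ) (V : ℕ → Ω → ℝ)
    (hW : ∀ t : ℕ, 1 ≤ t → ∀ ω, W t ω = 1 - Real.exp (w - G t ω))
    (hV0 : ∀ ω, V 0 ω = 1)
    (hVrec : ∀ t : ℕ, ∀ ω,
      V (t + 1) ω = V t ω * Real.exp (G (t + 1) ω + (B (t + 1) ω - B t ω + c))
        * (1 - W (t + 1) ω)) :
    ∀ T : ℕ, ∀ ω, V T ω = Real.exp (B T ω - B 0 ω + (c + w) * T) := by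
  intro T
  induction T with
  | zero => intro ω; simp [hV0]
  | succ t ih =>
    intro ω
    rw [hVrec t ω, hW (t+1) (by omega) ω, ih ω]
    rw [sub_sub_cancel, ← Real.exp_add, ← Real.exp_add]
    congr 1
    push_cast
    ring
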